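/- arXiv:1506.02996 — 3 statements merged into one kernel-verified Lean document; each statement's English description precedes it below -/
import Mathlib

section
/- Let a mesh of [0,1] be given and let (w_i)_{0 ≤ i ≤ I+1} ∈ ℝ^{I+2}. Then for every i with 1 ≤ i ≤ I, w_i² ≤ 2 ( Σ_{j=0}^{I} (w_{j+1} − w_j)²/h_{j+1/2} + w_0² + w_{I+1}² ), i.e. w_i² ≤ 2 ‖w_h‖_{1,T}². -/
open MeasureTheory Real Filter Topology

noncomputable section

namespace Corrosion

/-- The Bernoulli function `B(x) = x / (e^x - 1)`, `B(0) = 1`. -/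
def Bern (x : ℝ) : ℝ := if x = 0 then 1 else x / (Real.exp x - 1)

/-- The two species: cations `P` and electrons `N`. -/
inductive Sp | P | N

/-- charge numbers: `z_P = 3`, `z_N = -1`. -/
def z : Sp → ℝ
  | Sp.P => 3
  | Sp.N => -1

/-- A mesh of `[0,1]`: edge points `xe 0 = x_{1/2} = 0 < xe 1 = x_{3/2} < … < xe I = x_{I+1/2} = 1`. -/
structure Mesh where
  I : ℕ
  hI : 1 ≤ I
  xe : ℕ → ℝ
  xe0 : xe 0 = 0
  xeI : xe I = 1
  mono : ∀ j, j < I → xe j < xe (j + 1)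

namespace Mesh

variable (m : Mesh)

/-- cell centers `x_i` for `1 ≤ i ≤ I` , with `x_0 = 0` and `x_{I+1} = 1`. -/
def xc (i : ℕ) : ℝ :=
  if i = 0 then 0 else if i = m.I + 1 then 1 else (m.xe (i - 1) + m.xe i) / 2

/-- `h_i = x_{i+1/2} - x_{i-1/2}` for `1 ≤ i ≤ I`. -/
def h (i : ℕ) : ℝ := m.xe i - m.xe (i - 1)

/-- `h_{i+1/2} = x_{i+1} - x_i` for `0 ≤ i ≤ I`. -/
def hp (i : ℕ) : ℝ := m.xc (i + 1) - m.xc i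

/-- mesh size `h = max_{1 ≤ i ≤ I} h_i`. -/
def size : ℝ := (Finset.Icc 1 m.I).sup' ⟨1, Finset.mem_Icc.mpr ⟨le_refl 1, m.hI⟩⟩ m.h

/-- piecewise constant function associated to a vector `(w_i)_{0 ≤ i ≤ I+1}`:
equal to `w i` on `(x_{i-1/2}, x_{i+1/2})`, to `w 0` at `x = 0`, to `w (I+1)` at `x = 1`. -/
def pw (w : ℕ → ℝ) (x : ℝ) : ℝ :=
  if x = 0 then w 0 else if x = 1 then w (m.I + 1) else w (sInf {i : ℕ | x < m.xe i})

/-- square of the discrete `H¹` norm `‖w_h‖_{1,T}`. -/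
def norm1sq (w : ℕ → ℝ) : ℝ :=
  (∑ i ∈ Finset.range (m.I + 1), (w (i + 1) - w i) ^ 2 / m.hp i) + w 0 ^ 2 + w (m.I + 1) ^ 2

/-- square of the discrete `L²` norm `‖w_h‖_0`. -/
def norm0sq (w : ℕ → ℝ) : ℝ := ∑ i ∈ Finset.Icc 1 m.I, m.h i * w i ^ 2

/-- the discrete dual norm `‖w_h‖_{-1,2,T}`. -/
def normDual (w : ℕ → ℝ) : ℝ :=
  sSup {r : ℝ | ∃ v : ℕ → ℝ, m.norm1sq v ≤ 1 ∧
    r = ∫ x in Set.Ioo (0:ℝ) 1, m.pw w x * m.pw v x}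

/-- piecewise constant space derivative: on `(x_i, x_{i+1})` it equals `(w_{i+1} - w_i)/h_{i+1/2}`. -/
def dpw (w : ℕ → ℝ) (x : ℝ) : ℝ :=
  (w (sInf {i : ℕ | x < m.xc (i + 1)} + 1) - w (sInf {i : ℕ | x < m.xc (i + 1)})) /
    m.hp (sInf {i : ℕ | x < m.xc (i + 1)})

end Mesh

/-- All the data of the corrosion model. -/
structure Data where
  lam : ℝ
  eps : ℝ
  alpha0 : ℝ
  alpha1 : ℝ
  V : ℝ
  rho : ℝ
  dPsi0 : ℝ
  dPsi1 : ℝ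
  umax : Sp → ℝ
  m0 : Sp → ℝ
  k0 : Sp → ℝ
  m1 : Sp → ℝ
  k1 : Sp → ℝ
  a0 : Sp → ℝ
  b0 : Sp → ℝ
  a1 : Sp → ℝ
  b1 : Sp → ℝ
  u0 : Sp → ℝ → ℝ
  lam_pos : 0 < lam
  umax_pos : ∀ u, 0 < umax u
  m0_pos : ∀ u, 0 < m0 u
  k0_pos : ∀ u, 0 < k0 u
  m1_pos : ∀ u, 0 < m1 u
  k1_pos : ∀ u, 0 < k1 u
  a0_mem : ∀ u, a0 u ∈ Set.Icc (0:ℝ) 1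
  b0_mem : ∀ u, b0 u ∈ Set.Icc (0:ℝ) 1
  a1_mem : ∀ u, a1 u ∈ Set.Icc (0:ℝ) 1
  b1_mem : ∀ u, b1 u ∈ Set.Icc (0:ℝ) 1
  u0_meas : ∀ u, Measurable (u0 u)

namespace Data
variable (d : Data)

/-- `ε_P = 1`, `ε_N = ε`. -/
def epsu : Sp → ℝ
  | Sp.P => 1
  | Sp.N => d.eps

def beta0 (u : Sp) (x : ℝ) : ℝ :=
  d.m0 u * Real.exp (-(z u) * d.b0 u * x) + d.k0 u * Real.exp (z u * d.a0 u * x)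

def beta1 (u : Sp) (x : ℝ) : ℝ :=
  d.m1 u * Real.exp (-(z u) * d.b1 u * x) + d.k1 u * Real.exp (z u * d.a1 u * x)

def gamma0 (u : Sp) (x : ℝ) : ℝ := d.m0 u * d.umax u * Real.exp (-(z u) * d.b0 u * x)

def gamma1 (u : Sp) (x : ℝ) : ℝ := d.k1 u * d.umax u * Real.exp (z u * d.a1 u * x)

/-- Hypotheses (H). -/
def HypH : Prop :=
  (3 * d.umax Sp.P - d.umax Sp.N + d.rho = 0) ∧
  (∀ u, ∀ᵐ x ∂(volume.restrict (Set.Ioo (0:ℝ) 1)), 0 ≤ d.u0 u x ∧ d.u0 u x ≤ d.umax u) ∧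
  (-(1 / (3 * d.a0 Sp.P)) * (1 + Real.log (d.alpha0 * d.a0 Sp.P * d.k0 Sp.P)) ≤ d.dPsi0 ∧
    d.dPsi0 ≤ (1 / d.a0 Sp.N) * (1 + Real.log (d.alpha0 * d.a0 Sp.N * d.k0 Sp.N))) ∧
  (-(1 / d.b1 Sp.N) * (1 + Real.log (d.alpha1 * d.b1 Sp.N * d.m1 Sp.N)) ≤ d.dPsi1 ∧
    d.dPsi1 ≤ (1 / (3 * d.b1 Sp.P)) * (1 + Real.log (d.alpha1 * d.b1 Sp.P * d.m1 Sp.P)))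

end Data

/-- `dΨ_{i+1/2} = (Ψ_{i+1} - Ψ_i)/h_{i+1/2}`. -/
def dPsiF (m : Mesh) (Psi : ℕ → ℝ) (i : ℕ) : ℝ := (Psi (i + 1) - Psi i) / m.hp i

/-- the Scharfetter-Gummel numerical flux `F_{u,i+1/2}`. -/
def Flux (m : Mesh) (d : Data) (u : Sp) (Psi w : ℕ → ℝ) (i : ℕ) : ℝ :=
  (Bern (z u * m.hp i * dPsiF m Psi i) * w i -
    Bern (-(z u) * m.hp i * dPsiF m Psi i) * w (i + 1)) / m.hp i

/-- The fully implicit scheme (S), with time step `Δt = T / K`.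
`sol u k i` is `u_i^k` (for `u = P, N`) and `Psi k i` is `Ψ_i^k`. -/
def Scheme (m : Mesh) (d : Data) (T : ℝ) (K : ℕ)
    (sol : Sp → ℕ → ℕ → ℝ) (Psi : ℕ → ℕ → ℝ) : Prop :=
  (∀ u i, 1 ≤ i → i ≤ m.I →
    sol u 0 i = (1 / m.h i) * ∫ x in Set.Ioo (m.xe (i - 1)) (m.xe i), d.u0 u x) ∧
  (∀ k, k < K → ∀ i, 1 ≤ i → i ≤ m.I →
    -(d.lam ^ 2) * (dPsiF m (Psi (k + 1)) i - dPsiF m (Psi (k + 1)) (i - 1)) =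
      m.h i * (3 * sol Sp.P (k + 1) i - sol Sp.N (k + 1) i + d.rho)) ∧
  (∀ u k, k < K → ∀ i, 1 ≤ i → i ≤ m.I →
    d.epsu u * m.h i * (sol u (k + 1) i - sol u k i) / (T / K) +
      Flux m d u (Psi (k + 1)) (sol u (k + 1)) i -
      Flux m d u (Psi (k + 1)) (sol u (k + 1)) (i - 1) = 0) ∧
  (∀ k, k < K → Psi (k + 1) 0 - d.alpha0 * dPsiF m (Psi (k + 1)) 0 = d.dPsi0) ∧
  (∀ k, k < K →
    Psi (k + 1) (m.I + 1) + d.alpha1 * dPsiF m (Psi (k + 1)) m.I = d.V - d.dPsi1) ∧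
  (∀ u k, k < K →
    -(Flux m d u (Psi (k + 1)) (sol u (k + 1)) 0) =
      d.beta0 u (Psi (k + 1) 0) * sol u (k + 1) 0 - d.gamma0 u (Psi (k + 1) 0)) ∧
  (∀ u k, k < K →
    Flux m d u (Psi (k + 1)) (sol u (k + 1)) m.I =
      d.beta1 u (d.V - Psi (k + 1) (m.I + 1)) * sol u (k + 1) (m.I + 1) -
      d.gamma1 u (d.V - Psi (k + 1) (m.I + 1)))

/-- The stability property `0 ≤ u_i^k ≤ u^max` for all `i, k`. -/
def Stable (m : Mesh) (d : Data) (K : ℕ) (sol : Sp → ℕ → ℕ → ℝ) : Prop :=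
  ∀ u k, k ≤ K → ∀ i, i ≤ m.I + 1 → 0 ≤ sol u k i ∧ sol u k i ≤ d.umax u

/-- the approximate space-time solution `w_{h,Δt}`, equal to the piecewise constant
function built on `w^{k+1}` for `t ∈ [t^k, t^{k+1})`, with `Δt = T/K`. -/
def apx (m : Mesh) (T : ℝ) (K : ℕ) (w : ℕ → ℕ → ℝ) (x t : ℝ) : ℝ :=
  m.pw (w (Nat.floor (t / (T / K)) + 1)) x

/-- the discrete space derivative `∂_{x,T} w_{h,Δt}`. -/
def dapx (m : Mesh) (T : ℝ) (K : ℕ) (w : ℕ → ℕ → ℝ) (x t : ℝ) : ℝ :=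
  m.dpw (w (Nat.floor (t / (T / K)) + 1)) x


/-- hyperbolic cotangent `coth y = cosh y / sinh y`. -/
def coth (x : ℝ) : ℝ := Real.cosh x / Real.sinh x

/-- approximate trace at `x = 0`: `t ∈ [t^k, t^{k+1}) ↦ w_0^{k+1}`. -/
def trace0 (T : ℝ) (K : ℕ) (w : ℕ → ℕ → ℝ) (t : ℝ) : ℝ :=
  w (Nat.floor (t / (T / K)) + 1) 0

/-- approximate trace at `x = 1`: `t ∈ [t^k, t^{k+1}) ↦ w_{I+1}^{k+1}`. -/
def trace1 (m : Mesh) (T : ℝ) (K : ℕ) (w : ℕ → ℕ → ℝ) (t : ℝ) : ℝ :=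
  w (Nat.floor (t / (T / K)) + 1) (m.I + 1)

/-- the measure on `(0,1) × (0,T)` (space × time). -/
def stMeasure (T : ℝ) : MeasureTheory.Measure (ℝ × ℝ) :=
  (MeasureTheory.volume.restrict (Set.Ioo (0:ℝ) 1)).prod
    (MeasureTheory.volume.restrict (Set.Ioo (0:ℝ) T))

end Corrosion

namespace Corrosion

lemma Mesh.xe_lt (m : Mesh) : ∀ {j k : ℕ}, j < k → k ≤ m.I → m.xe j < m.xe k := by
  intro j k hjk hk
  induction k with
  | zero => omega
  | succ n ih =>
    rcases Nat.lt_succ_iff_lt_or_eq.mp hjk with h | h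
    · exact lt_trans (ih h (by omega)) (m.mono n (by omega))
    · subst h; exact m.mono j (by omega)

lemma Mesh.xe_lt_one (m : Mesh) {j : ℕ} (hj : j < m.I) : m.xe j < 1 := by
  have := m.xe_lt hj le_rfl
  rwa [m.xeI] at this

lemma Mesh.hp_pos (m : Mesh) {j : ℕ} (hj : j ≤ m.I) : 0 < m.hp j := by
  have hI := m.hI
  unfold Mesh.hp Mesh.xc
  rcases Nat.eq_zero_or_pos j with h0 | h0
  · subst h0
    simp only [if_pos rfl]
    have h1 : (1 : ℕ) ≠ m.I + 1 := by omega
    simp only [if_neg one_ne_zero, if_neg h1]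
    have := m.mono 0 (by omega)
    rw [m.xe0] at this
    norm_num at this ⊢
    linarith [m.xe0]
  rcases eq_or_ne j m.I with hjI | hjI
  · subst hjI
    have hne : m.I ≠ 0 := by omega
    have hne2 : m.I ≠ m.I + 1 := by omega
    rw [if_neg (by omega : m.I + 1 ≠ 0), if_pos rfl, if_neg hne, if_neg hne2]
    by_cases hII : m.I = 1
    · rw [hII]; norm_num
      have := m.xe_lt_one (j := 0) (by omega)
      have h2 : m.xe 1 = 1 := by rw [← m.xeI, hII]
      linarith
    · have h1 : m.xe (m.I - 1) < 1 := m.xe_lt_one (by omega)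
      have h2 : m.xe m.I = 1 := m.xeI
      linarith
  · have hj1 : j + 1 ≠ m.I + 1 := by omega
    have hjne : j ≠ 0 := by omega
    simp only [if_neg (Nat.succ_ne_zero j), if_neg hj1, if_neg hjne, if_neg hjI]
    have h1 : m.xe (j - 1) < m.xe (j + 1) := m.xe_lt (by omega) (by omega)
    have h2 : m.xe j < m.xe (j + 1) := m.xe_lt (by omega) (by omega)
    have h3 : m.xe (j - 1) < m.xe j := m.xe_lt (by omega) hj
    have hj2 : j ≠ m.I + 1 := by omega
    have : (j + 1) - 1 = j := by omega
    rw [this, if_neg hj2]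
    linarith

lemma Mesh.hp_sum (m : Mesh) : ∑ j ∈ Finset.range (m.I + 1), m.hp j = 1 := by
  have := Finset.sum_range_sub (fun j => m.xc j) (m.I + 1)
  simp only [Mesh.hp, this]
  unfold Mesh.xc
  have h := m.hI
  rw [if_pos rfl, if_neg (by omega : m.I + 1 ≠ 0), if_pos rfl]
  ring

end Corrosion

open Corrosion in
/-- `w_i² ≤ 2 ‖w_h‖_{1,T}²` for `1 ≤ i ≤ I`. -/
theorem discrete_pointwise_bound (m : Mesh) (w : ℕ → ℝ)
    (i : ℕ) (h1 : 1 ≤ i) (h2 : i ≤ m.I) :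
    w i ^ 2 ≤ 2 * m.norm1sq w := by
  classical
  set d : ℕ → ℝ := fun j => w (j + 1) - w j with hd
  have htel : ∑ j ∈ Finset.range i, d j = w i - w 0 := Finset.sum_range_sub w i
  have hS : w i = w 0 + ∑ j ∈ Finset.range i, d j := by rw [htel]; ring
  set S := ∑ j ∈ Finset.range i, d j with hSdef
  set B := ∑ j ∈ Finset.range (m.I + 1), d j ^ 2 / m.hp j with hB
  have hBnn : ∀ j ∈ Finset.range (m.I + 1), 0 ≤ d j ^ 2 / m.hp j := by
    intro j hj
    exact div_nonneg (sq_nonneg _) (le_of_lt (m.hp_pos (by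
      simp only [Finset.mem_range] at hj; omega)))
  -- Cauchy-Schwarz
  have hcs : S ^ 2 ≤ (∑ j ∈ Finset.range i, m.hp j) *
      (∑ j ∈ Finset.range i, d j ^ 2 / m.hp j) := by
    have := Finset.sum_mul_sq_le_sq_mul_sq (Finset.range i)
      (fun j => Real.sqrt (m.hp j)) (fun j => d j / Real.sqrt (m.hp j))
    have heq : ∀ j ∈ Finset.range i,
        Real.sqrt (m.hp j) * (d j / Real.sqrt (m.hp j)) = d j := by
      intro j hj
      have hpos : 0 < m.hp j := m.hp_pos (by
        simp only [Finset.mem_range] at hj; omega)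
      have : Real.sqrt (m.hp j) ≠ 0 := by positivity
      field_simp
    rw [Finset.sum_congr rfl heq] at this
    have heq2 : ∀ j ∈ Finset.range i, Real.sqrt (m.hp j) ^ 2 = m.hp j := by
      intro j hj
      exact Real.sq_sqrt (le_of_lt (m.hp_pos (by
        simp only [Finset.mem_range] at hj; omega)))
    have heq3 : ∀ j ∈ Finset.range i,
        (d j / Real.sqrt (m.hp j)) ^ 2 = d j ^ 2 / m.hp j := by
      intro j hj
      have hpos : 0 < m.hp j := m.hp_pos (by
        simp only [Finset.mem_range] at hj; omega)
      rw [div_pow, Real.sq_sqrt hpos.le]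
    rw [Finset.sum_congr rfl heq2, Finset.sum_congr rfl heq3] at this
    exact this
  have hsub : Finset.range i ⊆ Finset.range (m.I + 1) := by
    intro x hx; simp only [Finset.mem_range] at *; omega
  have h1' : ∑ j ∈ Finset.range i, m.hp j ≤ 1 := by
    rw [← m.hp_sum]
    exact Finset.sum_le_sum_of_subset_of_nonneg hsub (fun j hj _ =>
      (m.hp_pos (by simp only [Finset.mem_range] at hj; omega)).le)
  have h2' : ∑ j ∈ Finset.range i, d j ^ 2 / m.hp j ≤ B := by
    rw [hB]
    exact Finset.sum_le_sum_of_subset_of_nonneg hsub (fun j hj _ => hBnn j hj)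
  have hBnn' : 0 ≤ B := Finset.sum_nonneg hBnn
  have hpartial_nn : 0 ≤ ∑ j ∈ Finset.range i, d j ^ 2 / m.hp j :=
    Finset.sum_nonneg (fun j hj => hBnn j (hsub hj))
  have hS2 : S ^ 2 ≤ B := by
    calc S ^ 2 ≤ (∑ j ∈ Finset.range i, m.hp j) *
        (∑ j ∈ Finset.range i, d j ^ 2 / m.hp j) := hcs
      _ ≤ 1 * B := by
          apply mul_le_mul h1' h2' hpartial_nn (by norm_num)
      _ = B := one_mul B
  have hnorm : m.norm1sq w = B + w 0 ^ 2 + w (m.I + 1) ^ 2 := by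
    simp [Mesh.norm1sq, hB, hd]
  rw [hS, hnorm]
  nlinarith [sq_nonneg (w 0 - S), sq_nonneg (w (m.I + 1))]
end
end

section
/- Discrete Poincaré inequality: let a mesh of [0,1] be given and let (w_i)_{0 ≤ i ≤ I+1} ∈ ℝ^{I+2}. Then ‖w_h‖_0 ≤ √2 ‖w_h‖_{1,T}, i.e. Σ_{i=1}^{I} h_i w_i² ≤ 2 ( Σ_{j=0}^{I} (w_{j+1} − w_j)²/h_{j+1/2} + w_0² + w_{I+1}² ). -/
open MeasureTheory Real Filter Topology

noncomputable section

namespace Corrosion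
namespace Mesh

variable (m : Mesh)

lemma xe_lt_s3 : ∀ a b : ℕ, a < b → b ≤ m.I → m.xe a < m.xe b := by
  intro a b hab hb
  induction b with
  | zero => omega
  | succ n ih =>
    rcases Nat.lt_succ_iff_lt_or_eq.mp hab with h | h
    · exact lt_trans (ih h (by omega)) (m.mono n (by omega))
    · subst h; exact m.mono a (by omega)

lemma xe_le (a b : ℕ) (hab : a ≤ b) (hb : b ≤ m.I) : m.xe a ≤ m.xe b := by
  rcases eq_or_lt_of_le hab with h | h
  · subst h; exact le_rfl
  · exact (m.xe_lt_s3 a b h hb).le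

lemma xe_nonneg (i : ℕ) (hi : i ≤ m.I) : 0 ≤ m.xe i := by
  have := m.xe_le 0 i (Nat.zero_le _) hi
  rwa [m.xe0] at this

lemma xe_le_one (i : ℕ) (hi : i ≤ m.I) : m.xe i ≤ 1 := by
  have := m.xe_le i m.I hi le_rfl
  rwa [m.xeI] at this

lemma xc_zero : m.xc 0 = 0 := by simp [xc]

lemma xc_top : m.xc (m.I + 1) = 1 := by simp [xc]

lemma xc_mid (i : ℕ) (h1 : 1 ≤ i) (h2 : i ≤ m.I) :
    m.xc i = (m.xe (i - 1) + m.xe i) / 2 := by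
  have : i ≠ 0 := by omega
  have : i ≠ m.I + 1 := by omega
  simp [xc, *]

lemma xc_le_one (i : ℕ) (hi : i ≤ m.I + 1) : m.xc i ≤ 1 := by
  rcases Nat.eq_zero_or_pos i with h | h
  · subst h; rw [m.xc_zero]; norm_num
  rcases Nat.lt_or_ge i (m.I + 1) with h' | h'
  · have h2 : i ≤ m.I := by omega
    rw [m.xc_mid i h h2]
    have a1 := m.xe_le_one (i - 1) (by omega)
    have a2 := m.xe_le_one i h2
    linarith
  · have : i = m.I + 1 := by omega
    rw [this, m.xc_top]

lemma hp_pos_s3 (j : ℕ) (hj : j ≤ m.I) : 0 < m.hp j := by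
  unfold hp
  rcases Nat.eq_zero_or_pos j with h | h
  · subst h
    rw [m.xc_zero, m.xc_mid 1 le_rfl m.hI]
    have := m.xe_lt_s3 0 1 (by omega) m.hI
    rw [m.xe0] at this
    simp only [Nat.sub_self]
    rw [m.xe0]
    linarith
  rcases Nat.lt_or_ge j m.I with h' | h'
  · rw [m.xc_mid j h (by omega), m.xc_mid (j + 1) (by omega) h']
    have e : j + 1 - 1 = j := by omega
    rw [e]
    have := m.xe_lt_s3 (j - 1) (j + 1) (by omega) h'
    linarith
  · have hj' : j = m.I := by omega
    subst hj'
    rw [m.xc_top, m.xc_mid m.I m.hI le_rfl]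
    have a1 : m.xe (m.I - 1) < 1 := by
      have := m.xe_lt_s3 (m.I - 1) m.I (by omega) le_rfl
      rwa [m.xeI] at this
    have a2 := m.xe_le_one m.I le_rfl
    linarith

lemma h_pos (i : ℕ) (h1 : 1 ≤ i) (h2 : i ≤ m.I) : 0 < m.h i :=
  sub_pos.mpr (m.xe_lt_s3 (i - 1) i (by omega) h2)

lemma sum_hp (n : ℕ) : ∑ j ∈ Finset.range n, m.hp j = m.xc n := by
  have := Finset.sum_range_sub m.xc n
  rw [m.xc_zero] at this
  simpa [hp] using this

lemma sum_h : ∑ i ∈ Finset.Icc 1 m.I, m.h i = 1 := by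
  rw [← Finset.Ico_add_one_right_eq_Icc, Finset.sum_Ico_eq_sum_range]
  have e1 : m.I + 1 - 1 = m.I := by omega
  rw [e1]
  have : ∀ j ∈ Finset.range m.I, m.h (1 + j) = m.xe (j + 1) - m.xe j := by
    intro j _
    unfold h
    have e : 1 + j - 1 = j := by omega
    rw [e, Nat.add_comm 1 j]
  rw [Finset.sum_congr rfl this, Finset.sum_range_sub, m.xe0, m.xeI]
  ring

end Mesh
end Corrosion



open Corrosion in
/-- discrete Poincaré inequality `‖w_h‖_0² ≤ 2 ‖w_h‖_{1,T}²`. -/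
theorem discrete_poincare (m : Mesh) (w : ℕ → ℝ) :
    m.norm0sq w ≤ 2 * m.norm1sq w := by
  set S := ∑ j ∈ Finset.range (m.I + 1), (w (j + 1) - w j) ^ 2 / m.hp j with hS
  have hSnn : 0 ≤ S := Finset.sum_nonneg fun j hj =>
    div_nonneg (sq_nonneg _)
      (m.hp_pos_s3 j (Nat.lt_succ_iff.mp (Finset.mem_range.mp hj))).le
  have key : ∀ i ∈ Finset.Icc 1 m.I, w i ^ 2 ≤ 2 * w 0 ^ 2 + 2 * S := by
    intro i hi
    obtain ⟨h1, h2⟩ := Finset.mem_Icc.mp hi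
    set T := ∑ j ∈ Finset.range i, (w (j + 1) - w j) with hT
    have hw : w i = w 0 + T := by rw [hT, Finset.sum_range_sub]; ring
    have hpos : ∀ j ∈ Finset.range i, 0 < m.hp j := fun j hj =>
      m.hp_pos_s3 j (by have := Finset.mem_range.mp hj; omega)
    have hsum : ∑ j ∈ Finset.range i, m.hp j ≤ 1 := by
      rw [m.sum_hp]; exact m.xc_le_one i (by omega)
    have hsumpos : 0 < ∑ j ∈ Finset.range i, m.hp j :=
      Finset.sum_pos hpos ⟨0, Finset.mem_range.mpr (by omega)⟩
    have cs := Finset.sq_sum_div_le_sum_sq_div (Finset.range i)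
      (fun j => w (j + 1) - w j) hpos
    have hT2 : T ^ 2 ≤ (∑ j ∈ Finset.range i, (w (j + 1) - w j) ^ 2 / m.hp j) *
        ∑ j ∈ Finset.range i, m.hp j := (div_le_iff₀ hsumpos).mp cs
    have hPS : ∑ j ∈ Finset.range i, (w (j + 1) - w j) ^ 2 / m.hp j ≤ S := by
      apply Finset.sum_le_sum_of_subset_of_nonneg
      · exact Finset.range_subset_range.mpr (by omega)
      · intro j hj _
        exact div_nonneg (sq_nonneg _)
          (m.hp_pos_s3 j (Nat.lt_succ_iff.mp (Finset.mem_range.mp hj))).le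
    have hPnn : 0 ≤ ∑ j ∈ Finset.range i, (w (j + 1) - w j) ^ 2 / m.hp j :=
      Finset.sum_nonneg fun j hj => div_nonneg (sq_nonneg _) (hpos j hj).le
    have hT2' : T ^ 2 ≤ S := by nlinarith
    rw [hw]; nlinarith [sq_nonneg (w 0 - T)]
  unfold Mesh.norm0sq Mesh.norm1sq
  calc ∑ i ∈ Finset.Icc 1 m.I, m.h i * w i ^ 2
      ≤ ∑ i ∈ Finset.Icc 1 m.I, m.h i * (2 * w 0 ^ 2 + 2 * S) := by
        refine Finset.sum_le_sum fun i hi => ?_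
        obtain ⟨h1, h2⟩ := Finset.mem_Icc.mp hi
        exact mul_le_mul_of_nonneg_left (key i hi) (m.h_pos i h1 h2).le
    _ = 2 * w 0 ^ 2 + 2 * S := by rw [← Finset.sum_mul, m.sum_h, one_mul]
    _ ≤ 2 * ((∑ i ∈ Finset.range (m.I + 1), (w (i + 1) - w i) ^ 2 / m.hp i)
          + w 0 ^ 2 + w (m.I + 1) ^ 2) := by
        rw [← hS]; nlinarith [sq_nonneg (w (m.I + 1))]
end
end

section
/- Let ε ≥ 0, α_0 > 0, α_1 > 0, and assume hypotheses (H). There exists a constant C > 0, depending only on λ, α_0, α_1, V, ΔΨ_0^pzc, ΔΨ_1^pzc, P^max, N^max and ρ_hl (and independent of the mesh, of Δt and of k), such that for every mesh, every time step and every solution of the scheme (S) satisfying 0 ≤ P_i^k ≤ P^max and 0 ≤ N_i^k ≤ N^max for all i, k, one has ‖Ψ_h^{k+1}‖_{1,T}² ≤ C for all 0 ≤ k ≤ K−1, and consequently Σ_{k=0}^{K−1} Δt ‖Ψ_h^{k+1}‖_{1,T}² ≤ C T, where Ψ_h^{k+1} is the piecewise constant function associated with (Ψ_i^{k+1})_{0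 ≤ i ≤ I+1}. -/
open MeasureTheory Real Filter Topology

noncomputable section

namespace CorrosionAux
open Corrosion

section Aux

private lemma abel_sum (D ψ : ℕ → ℝ) (n : ℕ) :
    ∑ i ∈ Finset.Icc 1 n, (D (i-1) - D i) * ψ i
      = ∑ i ∈ Finset.range (n+1), D i * (ψ (i+1) - ψ i) + D 0 * ψ 0 - D n * ψ (n+1) := by
  induction n with
  | zero => simp [Finset.sum_range_succ]; ring
  | succ n ih =>
      rw [Finset.sum_Icc_succ_top (by omega : 1 ≤ n+1), ih,
        Finset.sum_range_succ (fun i => D i * (ψ (i + 1) - ψ i)) (n+1)]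
      simp only [Nat.add_sub_cancel]
      ring

private lemma sum_Icc_telesc (f : ℕ → ℝ) (n : ℕ) :
    ∑ i ∈ Finset.Icc 1 n, (f i - f (i-1)) = f n - f 0 := by
  induction n with
  | zero => simp
  | succ n ih =>
      rw [Finset.sum_Icc_succ_top (by omega : 1 ≤ n+1), ih]
      simp only [Nat.add_sub_cancel]
      ring

private lemma robin_bound (α a x : ℝ) (hα : 0 < α) :
    x^2/(2*α) - a^2/(2*α) ≤ (x - a)/α * x := by
  have h : x^2/2 - a^2/2 ≤ (x - a) * x := by nlinarith [sq_nonneg (x - a)]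
  have h2 : (x^2/2 - a^2/2)/α ≤ ((x-a)*x)/α := by gcongr
  calc x^2/(2*α) - a^2/(2*α) = (x^2/2 - a^2/2)/α := by ring
    _ ≤ ((x-a)*x)/α := h2
    _ = (x-a)/α*x := by ring

end Aux


open Corrosion

private lemma xc_zero (m : Mesh) : m.xc 0 = 0 := by simp [Mesh.xc]

private lemma xc_top (m : Mesh) : m.xc (m.I + 1) = 1 := by
  simp [Mesh.xc]

private lemma xc_mid (m : Mesh) (i : ℕ) (h1 : 1 ≤ i) (h2 : i ≤ m.I) :
    m.xc i = (m.xe (i-1) + m.xe i) / 2 := by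
  rw [Mesh.xc, if_neg (by omega), if_neg (by omega)]

private lemma hp_pos (m : Mesh) (i : ℕ) (hi : i ≤ m.I) : 0 < m.hp i := by
  have hI := m.hI
  rw [Mesh.hp, sub_pos]
  rcases Nat.eq_zero_or_pos i with h0 | h1
  · subst h0
    rw [xc_zero, xc_mid m 1 le_rfl (by omega)]
    have hx : m.xe 0 < m.xe 1 := m.mono 0 (by omega)
    rw [m.xe0] at hx
    simp only [Nat.sub_self]
    rw [m.xe0]
    linarith
  · have hx1 : m.xe (i-1) < m.xe i := by
      have := m.mono (i-1) (by omega)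
      rwa [Nat.sub_add_cancel h1] at this
    rcases eq_or_lt_of_le hi with hIe | hlt
    · have htop : m.xc (i+1) = 1 := by rw [hIe]; exact xc_top m
      have hxe : m.xe i = 1 := by rw [hIe, m.xeI]
      rw [htop, xc_mid m i h1 hi]
      linarith
    · rw [xc_mid m i h1 hi, xc_mid m (i+1) (by omega) (by omega)]
      simp only [Nat.add_sub_cancel]
      have hx2 := m.mono i hlt
      linarith

private lemma sum_hp (m : Mesh) : ∑ i ∈ Finset.range (m.I + 1), m.hp i = 1 := by
  have h := Finset.sum_range_sub m.xc (m.I + 1)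
  have : ∑ i ∈ Finset.range (m.I + 1), m.hp i
      = ∑ i ∈ Finset.range (m.I + 1), (m.xc (i+1) - m.xc i) := rfl
  rw [this, h, xc_top, xc_zero]
  ring

private lemma h_pos (m : Mesh) (i : ℕ) (h1 : 1 ≤ i) (h2 : i ≤ m.I) : 0 < m.h i := by
  have := m.mono (i-1) (by omega)
  rw [Nat.sub_add_cancel h1] at this
  simpa [Mesh.h] using sub_pos.mpr this

private lemma sum_h (m : Mesh) : ∑ i ∈ Finset.Icc 1 m.I, m.h i = 1 := by
  have : ∑ i ∈ Finset.Icc 1 m.I, m.h i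
      = ∑ i ∈ Finset.Icc 1 m.I, (m.xe i - m.xe (i-1)) := rfl
  rw [this, sum_Icc_telesc m.xe m.I, m.xeI, m.xe0]
  ring

private lemma psi_linf (m : Mesh) (ψ : ℕ → ℝ) (i : ℕ) (hi : i ≤ m.I + 1) :
    |ψ i| ≤ |ψ 0| + Real.sqrt (∑ j ∈ Finset.range (m.I+1), (ψ (j+1) - ψ j)^2 / m.hp j) := by
  set E := ∑ j ∈ Finset.range (m.I+1), (ψ (j+1) - ψ j)^2 / m.hp j with hE
  have hEnn : 0 ≤ E := Finset.sum_nonneg fun j hj =>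
    div_nonneg (sq_nonneg _) (le_of_lt (hp_pos m j (by have := Finset.mem_range.mp hj; omega)))
  have habs : ∑ j ∈ Finset.range (m.I+1), |ψ (j+1) - ψ j| ≤ Real.sqrt E := by
    set s := ∑ j ∈ Finset.range (m.I+1), |ψ (j+1) - ψ j| with hs
    have hs0 : 0 ≤ s := Finset.sum_nonneg fun j _ => abs_nonneg _
    have hcs := Finset.sum_mul_sq_le_sq_mul_sq (Finset.range (m.I+1))
      (fun j => Real.sqrt (m.hp j)) (fun j => |ψ (j+1) - ψ j| / Real.sqrt (m.hp j))
    have h1 : ∑ j ∈ Finset.range (m.I+1),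
        Real.sqrt (m.hp j) * (|ψ (j+1) - ψ j| / Real.sqrt (m.hp j)) = s := by
      apply Finset.sum_congr rfl
      intro j hj
      have hpj : 0 < m.hp j := hp_pos m j (by have := Finset.mem_range.mp hj; omega)
      rw [mul_comm]
      exact div_mul_cancel₀ _ (ne_of_gt (Real.sqrt_pos.mpr hpj))
    have h2 : ∑ j ∈ Finset.range (m.I+1), Real.sqrt (m.hp j) ^ 2 = 1 := by
      rw [← sum_hp m]
      apply Finset.sum_congr rfl
      intro j hj
      exact Real.sq_sqrt (le_of_lt (hp_pos m j (by have := Finset.mem_range.mp hj; omega)))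
    have h3 : ∑ j ∈ Finset.range (m.I+1), (|ψ (j+1) - ψ j| / Real.sqrt (m.hp j)) ^ 2 = E := by
      apply Finset.sum_congr rfl
      intro j hj
      have hpj : 0 < m.hp j := hp_pos m j (by have := Finset.mem_range.mp hj; omega)
      rw [div_pow, sq_abs, Real.sq_sqrt (le_of_lt hpj)]
    rw [h1, h2, h3, one_mul] at hcs
    calc s = Real.sqrt (s^2) := (Real.sqrt_sq hs0).symm
      _ ≤ Real.sqrt E := Real.sqrt_le_sqrt hcs
  have htel : ψ i - ψ 0 = ∑ j ∈ Finset.range i, (ψ (j+1) - ψ j) :=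
    (Finset.sum_range_sub ψ i).symm
  have hstep : |ψ i - ψ 0| ≤ Real.sqrt E := by
    rw [htel]
    calc |∑ j ∈ Finset.range i, (ψ (j+1) - ψ j)|
        ≤ ∑ j ∈ Finset.range i, |ψ (j+1) - ψ j| := Finset.abs_sum_le_sum_abs _ _
      _ ≤ ∑ j ∈ Finset.range (m.I+1), |ψ (j+1) - ψ j| :=
          Finset.sum_le_sum_of_subset_of_nonneg
            (Finset.range_subset_range.mpr (by omega)) (fun j _ _ => abs_nonneg _)
      _ ≤ Real.sqrt E := habs
  calc |ψ i| = |ψ 0 + (ψ i - ψ 0)| := by ring_nf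
    _ ≤ |ψ 0| + |ψ i - ψ 0| := abs_add_le _ _
    _ ≤ |ψ 0| + Real.sqrt E := add_le_add_right hstep _

end CorrosionAux

set_option maxHeartbeats 1000000 in
open Corrosion in
/-- discrete `H¹` estimate on the potential, uniform in the mesh,
the time step and the time index. -/
theorem discrete_H1_estimate_potential
    (d : Data) (heps : 0 ≤ d.eps) (ha0 : 0 < d.alpha0) (ha1 : 0 < d.alpha1) (hH : d.HypH) :
    ∃ C : ℝ, 0 < C ∧ ∀ (T : ℝ), 0 < T → ∀ (K : ℕ), 1 ≤ K → ∀ (m : Mesh)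
      (sol : Sp → ℕ → ℕ → ℝ) (Psi : ℕ → ℕ → ℝ),
      Scheme m d T K sol Psi → Stable m d K sol →
      (∀ k, k < K → m.norm1sq (Psi (k + 1)) ≤ C) ∧
      (∑ k ∈ Finset.range K, T / K * m.norm1sq (Psi (k + 1))) ≤ C * T := by
  set M := 3 * d.umax Sp.P + d.umax Sp.N + |d.rho| with hM
  have hMpos : 0 < M := by
    have h1 := d.umax_pos Sp.P
    have h2 := d.umax_pos Sp.N
    have h3 := abs_nonneg d.rho
    rw [hM]; linarith
  have hlam2 : 0 < d.lam ^ 2 := by have := d.lam_pos; positivity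
  set b := M / d.lam ^ 2 with hbdef
  have hbnn : 0 ≤ b := le_of_lt (div_pos hMpos hlam2)
  set A := d.dPsi0 ^ 2 / (2 * d.alpha0) + (d.V - d.dPsi1) ^ 2 / (2 * d.alpha1) with hAdef
  have hAnn : 0 ≤ A := by rw [hAdef]; positivity
  set c1 := b * (1 + Real.sqrt (2 * d.alpha0)) with hc1def
  have hc1nn : 0 ≤ c1 := mul_nonneg hbnn (by positivity)
  set Smax := 2 * A + c1 ^ 2 with hSmaxdef
  have hSmaxnn : 0 ≤ Smax := by rw [hSmaxdef]; positivity
  set coef := 1 + 2 * d.alpha0 + 2 * d.alpha1 with hcoef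
  have hcoefpos : 0 < coef := by rw [hcoef]; linarith
  refine ⟨coef * Smax + 1, by nlinarith, ?_⟩
  intro T hT K hK m sol Psi hS hStable
  have key : ∀ k, k < K → m.norm1sq (Psi (k + 1)) ≤ coef * Smax + 1 := by
    intro k hk
    obtain ⟨-, hP, -, hB0, hB1, -, -⟩ := hS
    have hPk := fun i h1 h2 => hP k hk i h1 h2
    have hB0k := hB0 k hk
    have hB1k := hB1 k hk
    set ψ : ℕ → ℝ := Psi (k + 1) with hψdef
    set E := ∑ i ∈ Finset.range (m.I + 1), (ψ (i + 1) - ψ i) ^ 2 / m.hp i with hEdef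
    have hEnn : 0 ≤ E := Finset.sum_nonneg fun j hj =>
      div_nonneg (sq_nonneg _)
        (le_of_lt (CorrosionAux.hp_pos m j (by have := Finset.mem_range.mp hj; omega)))
    have hDdef : ∀ i, dPsiF m ψ i = (ψ (i + 1) - ψ i) / m.hp i := fun _ => rfl
    have hsum : d.lam ^ 2 * (E + dPsiF m ψ 0 * ψ 0 - dPsiF m ψ m.I * ψ (m.I + 1))
        = ∑ i ∈ Finset.Icc 1 m.I,
            m.h i * (3 * sol Sp.P (k + 1) i - sol Sp.N (k + 1) i + d.rho) * ψ i := by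
      have heach : ∀ i ∈ Finset.Icc 1 m.I,
          d.lam ^ 2 * ((dPsiF m ψ (i - 1) - dPsiF m ψ i) * ψ i)
            = m.h i * (3 * sol Sp.P (k + 1) i - sol Sp.N (k + 1) i + d.rho) * ψ i := by
        intro i hi
        obtain ⟨h1, h2⟩ := Finset.mem_Icc.mp hi
        have h := hPk i h1 h2
        linear_combination (ψ i) * h
      have hEsum : ∑ i ∈ Finset.range (m.I + 1), dPsiF m ψ i * (ψ (i + 1) - ψ i) = E := by
        rw [hEdef]
        apply Finset.sum_congr rfl
        intro j hj
        rw [hDdef]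
        ring
      have habel := CorrosionAux.abel_sum (dPsiF m ψ) ψ m.I
      rw [← hEsum, ← habel, Finset.mul_sum]
      exact Finset.sum_congr rfl heach
    set X := |ψ 0| + Real.sqrt E with hX
    have hXnn : 0 ≤ X := add_nonneg (abs_nonneg _) (Real.sqrt_nonneg _)
    have hRHS : ∑ i ∈ Finset.Icc 1 m.I,
        m.h i * (3 * sol Sp.P (k + 1) i - sol Sp.N (k + 1) i + d.rho) * ψ i ≤ M * X := by
      have hle : ∀ i ∈ Finset.Icc 1 m.I,
          m.h i * (3 * sol Sp.P (k + 1) i - sol Sp.N (k + 1) i + d.rho) * ψ i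
            ≤ m.h i * (M * X) := by
        intro i hi
        obtain ⟨h1, h2⟩ := Finset.mem_Icc.mp hi
        have hh : 0 ≤ m.h i := le_of_lt (CorrosionAux.h_pos m i h1 h2)
        have hPst := hStable Sp.P (k + 1) (by omega) i (by omega)
        have hNst := hStable Sp.N (k + 1) (by omega) i (by omega)
        have hf : |3 * sol Sp.P (k + 1) i - sol Sp.N (k + 1) i + d.rho| ≤ M := by
          rw [hM, abs_le]
          constructor <;>
            linarith [hPst.1, hPst.2, hNst.1, hNst.2, le_abs_self d.rho, neg_abs_le d.rho,
              (d.umax_pos Sp.P).le, (d.umax_pos Sp.N).le]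
        have hψle : |ψ i| ≤ X := by
          rw [hX, hEdef]
          exact CorrosionAux.psi_linf m ψ i (by omega)
        calc m.h i * (3 * sol Sp.P (k + 1) i - sol Sp.N (k + 1) i + d.rho) * ψ i
            = m.h i * ((3 * sol Sp.P (k + 1) i - sol Sp.N (k + 1) i + d.rho) * ψ i) := by ring
          _ ≤ m.h i * (M * X) := by
              apply mul_le_mul_of_nonneg_left _ hh
              calc (3 * sol Sp.P (k + 1) i - sol Sp.N (k + 1) i + d.rho) * ψ i
                  ≤ |(3 * sol Sp.P (k + 1) i - sol Sp.N (k + 1) i + d.rho) * ψ i| :=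
                    le_abs_self _
                _ = |3 * sol Sp.P (k + 1) i - sol Sp.N (k + 1) i + d.rho| * |ψ i| :=
                    abs_mul _ _
                _ ≤ M * X := mul_le_mul hf hψle (abs_nonneg _) (le_of_lt hMpos)
      calc ∑ i ∈ Finset.Icc 1 m.I,
            m.h i * (3 * sol Sp.P (k + 1) i - sol Sp.N (k + 1) i + d.rho) * ψ i
          ≤ ∑ i ∈ Finset.Icc 1 m.I, m.h i * (M * X) := Finset.sum_le_sum hle
        _ = (∑ i ∈ Finset.Icc 1 m.I, m.h i) * (M * X) := (Finset.sum_mul _ _ _).symm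
        _ = M * X := by rw [CorrosionAux.sum_h m]; ring
    have hD0 : dPsiF m ψ 0 = (ψ 0 - d.dPsi0) / d.alpha0 := by
      rw [eq_div_iff (ne_of_gt ha0)]
      linarith [hB0k]
    have hDI : dPsiF m ψ m.I = (d.V - d.dPsi1 - ψ (m.I + 1)) / d.alpha1 := by
      rw [eq_div_iff (ne_of_gt ha1)]
      linarith [hB1k]
    have hb0 : ψ 0 ^ 2 / (2 * d.alpha0) - d.dPsi0 ^ 2 / (2 * d.alpha0)
        ≤ dPsiF m ψ 0 * ψ 0 := by
      rw [hD0]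
      exact CorrosionAux.robin_bound d.alpha0 d.dPsi0 (ψ 0) ha0
    have hb1 : ψ (m.I + 1) ^ 2 / (2 * d.alpha1) - (d.V - d.dPsi1) ^ 2 / (2 * d.alpha1)
        ≤ -(dPsiF m ψ m.I * ψ (m.I + 1)) := by
      rw [hDI]
      calc ψ (m.I + 1) ^ 2 / (2 * d.alpha1) - (d.V - d.dPsi1) ^ 2 / (2 * d.alpha1)
          ≤ (ψ (m.I + 1) - (d.V - d.dPsi1)) / d.alpha1 * ψ (m.I + 1) :=
            CorrosionAux.robin_bound d.alpha1 (d.V - d.dPsi1) (ψ (m.I + 1)) ha1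
        _ = -((d.V - d.dPsi1 - ψ (m.I + 1)) / d.alpha1 * ψ (m.I + 1)) := by ring
    set S := E + ψ 0 ^ 2 / (2 * d.alpha0) + ψ (m.I + 1) ^ 2 / (2 * d.alpha1) with hSdef
    have ht0 : 0 ≤ ψ 0 ^ 2 / (2 * d.alpha0) := by positivity
    have ht1 : 0 ≤ ψ (m.I + 1) ^ 2 / (2 * d.alpha1) := by positivity
    have hSnn : 0 ≤ S := by rw [hSdef]; linarith
    have hSA : S ≤ A + b * X := by
      have h1 : d.lam ^ 2 * (S - A)
          ≤ d.lam ^ 2 * (E + dPsiF m ψ 0 * ψ 0 - dPsiF m ψ m.I * ψ (m.I + 1)) := by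
        apply mul_le_mul_of_nonneg_left _ (le_of_lt hlam2)
        rw [hSdef, hAdef]
        linarith [hb0, hb1]
      rw [hsum] at h1
      have h3 : d.lam ^ 2 * (S - A) ≤ M * X := le_trans h1 hRHS
      have h4 : S - A ≤ b * X := by
        rw [hbdef, div_mul_eq_mul_div, le_div_iff₀ hlam2]
        linarith [h3]
      linarith
    have hψ0S : ψ 0 ^ 2 ≤ 2 * d.alpha0 * S := by
      have h5 : ψ 0 ^ 2 / (2 * d.alpha0) ≤ S := by rw [hSdef]; linarith
      calc ψ 0 ^ 2 = 2 * d.alpha0 * (ψ 0 ^ 2 / (2 * d.alpha0)) := by field_simp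
        _ ≤ 2 * d.alpha0 * S := by
            apply mul_le_mul_of_nonneg_left h5 (by linarith)
    have hψ1S : ψ (m.I + 1) ^ 2 ≤ 2 * d.alpha1 * S := by
      have h5 : ψ (m.I + 1) ^ 2 / (2 * d.alpha1) ≤ S := by rw [hSdef]; linarith
      calc ψ (m.I + 1) ^ 2 = 2 * d.alpha1 * (ψ (m.I + 1) ^ 2 / (2 * d.alpha1)) := by field_simp
        _ ≤ 2 * d.alpha1 * S := by
            apply mul_le_mul_of_nonneg_left h5 (by linarith)
    have hES : E ≤ S := by rw [hSdef]; linarith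
    have habs0 : |ψ 0| ≤ Real.sqrt (2 * d.alpha0) * Real.sqrt S := by
      rw [← Real.sqrt_mul (by linarith : (0:ℝ) ≤ 2 * d.alpha0), ← Real.sqrt_sq_eq_abs]
      exact Real.sqrt_le_sqrt hψ0S
    have hsqE : Real.sqrt E ≤ Real.sqrt S := Real.sqrt_le_sqrt hES
    have hXS : X ≤ (1 + Real.sqrt (2 * d.alpha0)) * Real.sqrt S := by
      have hexp : (1 + Real.sqrt (2 * d.alpha0)) * Real.sqrt S
          = Real.sqrt S + Real.sqrt (2 * d.alpha0) * Real.sqrt S := by ring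
      rw [hX, hexp]
      linarith [habs0, hsqE]
    clear_value M b A c1 Smax coef E X S
    have hyoung : c1 * Real.sqrt S ≤ S / 2 + c1 ^ 2 / 2 := by
      have hq : Real.sqrt S ^ 2 = S := Real.sq_sqrt hSnn
      have hsq := sq_nonneg (Real.sqrt S - c1)
      have h2 : (Real.sqrt S - c1) ^ 2
          = Real.sqrt S ^ 2 - 2 * (c1 * Real.sqrt S) + c1 ^ 2 := by ring
      rw [h2, hq] at hsq
      linarith
    have hSS : S ≤ Smax := by
      have hbX : b * X ≤ c1 * Real.sqrt S := by
        rw [hc1def]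
        calc b * X ≤ b * ((1 + Real.sqrt (2 * d.alpha0)) * Real.sqrt S) :=
              mul_le_mul_of_nonneg_left hXS hbnn
          _ = b * (1 + Real.sqrt (2 * d.alpha0)) * Real.sqrt S := by ring
      rw [hSmaxdef]
      linarith [hSA, hbX, hyoung]
    have hnorm : m.norm1sq ψ = E + ψ 0 ^ 2 + ψ (m.I + 1) ^ 2 := by
      rw [Mesh.norm1sq, hEdef]
    rw [hnorm]
    have hcs : coef * S ≤ coef * Smax := mul_le_mul_of_nonneg_left hSS (le_of_lt hcoefpos)
    have hexp : coef * S = S + 2 * d.alpha0 * S + 2 * d.alpha1 * S := by rw [hcoef]; ring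
    linarith [hES, hψ0S, hψ1S]
  refine ⟨key, ?_⟩
  have hKpos : (0:ℝ) < K := by exact_mod_cast Nat.lt_of_lt_of_le Nat.zero_lt_one hK
  have hTK : 0 < T / K := div_pos hT hKpos
  calc ∑ k ∈ Finset.range K, T / K * m.norm1sq (Psi (k + 1))
      ≤ ∑ k ∈ Finset.range K, T / K * (coef * Smax + 1) := by
        apply Finset.sum_le_sum
        intro k hk
        exact mul_le_mul_of_nonneg_left (key k (Finset.mem_range.mp hk)) (le_of_lt hTK)
    _ = (K : ℝ) * (T / K * (coef * Smax + 1)) := by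
        rw [Finset.sum_const, Finset.card_range, nsmul_eq_mul]
    _ = (coef * Smax + 1) * T := by
        field_simp
end
end
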